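/- arXiv:2403.10345 — 4 statements merged into one kernel-verified Lean document; each statement's English description precedes it below -/
import Mathlib

section
/- Let A = c(uvᵀ − I) be an n×n real matrix with u, v ∈ ℝⁿ and c ∈ ℝ. Then for all i ≠ j, the (i,j) minor of A (the determinant of A with the i-th row and j-th column deleted) equals (−1)^{n−1+i+j} c^{n−1} u_j v_i. -/
open Matrix Polynomial

private lemma key_mul' {N : ℕ} {K : Type*} [CommRing K] (u v : Fin N → K) (s : K) :
    (vecMulVec u v - s • 1) * (vecMulVec u v + (s - v ⬝ᵥ u) • 1)
      = (s * (v ⬝ᵥ u - s)) • (1 : Matrix (Fin N) (Fin N) K) := by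
  have h1 : vecMulVec u v * vecMulVec u v = (v ⬝ᵥ u) • vecMulVec u v := by
    ext i j
    simp only [mul_apply, vecMulVec_apply, Matrix.smul_apply, smul_eq_mul, dotProduct,
      Finset.sum_mul, Finset.mul_sum]
    exact Finset.sum_congr rfl fun k _ => by ring
  rw [sub_mul, mul_add, mul_add, h1, Matrix.mul_smul, Matrix.mul_one, Matrix.smul_mul,
    Matrix.smul_mul, Matrix.one_mul]
  ext i j
  simp only [Matrix.add_apply, Matrix.sub_apply, Matrix.smul_apply, smul_eq_mul, Matrix.one_apply, vecMulVec_apply]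
  by_cases h : i = j <;> simp [h] <;> ring

private lemma adj_field' {m : ℕ} {K : Type*} [Field K] (u v : Fin (m + 2) → K) (s : K)
    (hs : s ≠ 0) (hts : v ⬝ᵥ u ≠ s) :
    adjugate (vecMulVec u v - s • 1)
      = ((-1) ^ (m + 1) * s ^ m) • (vecMulVec u v + (s - v ⬝ᵥ u) • 1) := by
  set B : Matrix (Fin (m+2)) (Fin (m+2)) K := vecMulVec u v - s • 1 with hB
  have hfac : B = (-s) • (1 + replicateCol Unit ((-s⁻¹) • u) * replicateRow Unit v) := by
    rw [← vecMulVec_eq Unit]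
    ext i j
    simp only [hB, Matrix.sub_apply, Matrix.smul_apply, Matrix.add_apply, Matrix.one_apply, vecMulVec_apply,
      Pi.smul_apply, smul_eq_mul]
    by_cases h : i = j <;> field_simp [h] <;> ring
  have hdet : B.det = (-1) ^ (m + 1) * s ^ (m + 1) * (v ⬝ᵥ u - s) := by
    rw [hfac, det_smul, det_one_add_replicateCol_mul_replicateRow]
    simp only [Fintype.card_fin, dotProduct_smul, smul_eq_mul]
    field_simp
    ring
  have hdet_ne : B.det ≠ 0 := by
    rw [hdet]
    exact mul_ne_zero (mul_ne_zero (pow_ne_zero _ (by norm_num)) (pow_ne_zero _ hs))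
      (sub_ne_zero.mpr hts)
  have hInv : Invertible B := B.invertibleOfIsUnitDet (isUnit_iff_ne_zero.mpr hdet_ne)
  set M : Matrix (Fin (m+2)) (Fin (m+2)) K :=
    ((-1) ^ (m + 1) * s ^ m) • (vecMulVec u v + (s - v ⬝ᵥ u) • 1) with hM
  have hBM : B * M = B.det • 1 := by
    rw [hM, Matrix.mul_smul, key_mul', smul_smul, hdet]
    congr 1
    ring
  calc adjugate B = ⅟B * (B * adjugate B) := (invOf_mul_cancel_left _ _).symm
    _ = ⅟B * (B * M) := by rw [mul_adjugate, hBM]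
    _ = M := invOf_mul_cancel_left _ _

private lemma mapMatrix_vmv_sub_smul' {N : ℕ} {R S : Type*} [CommRing R] [CommRing S]
    (f : R →+* S) (U V : Fin N → R) (s : R) :
    f.mapMatrix (vecMulVec U V - s • 1)
      = vecMulVec (f ∘ U) (f ∘ V) - (f s) • 1 := by
  ext i j
  simp only [RingHom.mapMatrix_apply, Matrix.map_apply, Matrix.sub_apply, Matrix.smul_apply,
    vecMulVec_apply, Matrix.one_apply, smul_eq_mul, Function.comp_apply]
  rw [f.map_sub, f.map_mul]
  by_cases h : i = j <;> simp [h]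

private lemma mapMatrix_M' {N : ℕ} {R S : Type*} [CommRing R] [CommRing S] (f : R →+* S)
    (U V : Fin N → R) (s c : R) :
    f.mapMatrix (c • (vecMulVec U V + (s - V ⬝ᵥ U) • 1))
      = (f c) • (vecMulVec (f ∘ U) (f ∘ V) + (f s - (f ∘ V) ⬝ᵥ (f ∘ U)) • 1) := by
  ext i j
  simp only [RingHom.mapMatrix_apply, Matrix.map_apply, Matrix.add_apply, Matrix.smul_apply,
    vecMulVec_apply, Matrix.one_apply, smul_eq_mul, Function.comp_apply]
  rw [← f.map_dotProduct]
  by_cases h : i = j <;>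
    simp only [h, if_true, if_false, mul_one, mul_zero, add_zero, f.map_mul, f.map_add,
      f.map_sub, f.map_one]

private lemma adj_real' {m : ℕ} (u v : Fin (m + 2) → ℝ) :
    adjugate (vecMulVec u v - 1)
      = ((-1 : ℝ) ^ (m + 1)) • (vecMulVec u v + (1 - v ⬝ᵥ u) • 1) := by
  set f : Polynomial ℝ →+* FractionRing (Polynomial ℝ) :=
    algebraMap (Polynomial ℝ) (FractionRing (Polynomial ℝ)) with hfdef
  have hf : Function.Injective f := IsFractionRing.injective (Polynomial ℝ) _
  set U : Fin (m+2) → Polynomial ℝ := fun k => C (u k) with hU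
  set V : Fin (m+2) → Polynomial ℝ := fun k => C (v k) with hV
  set s : Polynomial ℝ := 1 - X with hs_def
  have hVU : V ⬝ᵥ U = C (v ⬝ᵥ u) := by
    simp [dotProduct, hU, hV, map_sum]
  have hs0 : s ≠ 0 := by
    intro h
    have hx : (X : Polynomial ℝ) = C (1:ℝ) := by rw [Polynomial.C_1]; linear_combination -h
    exact X_ne_C 1 hx
  have hts : V ⬝ᵥ U ≠ s := by
    rw [hVU, hs_def]
    intro h
    exact X_ne_C (1 - v ⬝ᵥ u) (by rw [Polynomial.C_sub, Polynomial.C_1]; linear_combination h)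
  have h1 := f.map_adjugate (vecMulVec U V - s • 1)
  rw [mapMatrix_vmv_sub_smul',
    adj_field' (f ∘ U) (f ∘ V) (f s) (fun h => hs0 (hf (by rw [h, f.map_zero])))
      (by rw [← f.map_dotProduct]; exact fun h => hts (hf h))] at h1
  have h2 : f.mapMatrix (((-1) ^ (m + 1) * s ^ m : Polynomial ℝ) •
        (vecMulVec U V + (s - V ⬝ᵥ U) • 1))
      = ((-1) ^ (m + 1) * (f s) ^ m) •
        (vecMulVec (f ∘ U) (f ∘ V) + (f s - (f ∘ V) ⬝ᵥ (f ∘ U)) • 1) := by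
    rw [mapMatrix_M', f.map_mul, f.map_pow, f.map_pow, f.map_neg, f.map_one]
  have hadjR : adjugate (vecMulVec U V - s • 1)
      = (((-1) ^ (m + 1) * s ^ m : Polynomial ℝ)) • (vecMulVec U V + (s - V ⬝ᵥ U) • 1) :=
    Matrix.map_injective hf (h1.trans h2.symm)
  have h3 := congrArg (Polynomial.evalRingHom (0:ℝ)).mapMatrix hadjR
  rw [(Polynomial.evalRingHom (0:ℝ)).map_adjugate, mapMatrix_vmv_sub_smul', mapMatrix_M'] at h3
  have hsval : (evalRingHom (0:ℝ)) s = 1 := by simp [hs_def, eval_sub, eval_one, eval_X]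
  have hUval : ⇑(evalRingHom (0:ℝ)) ∘ U = u := by ext k; simp [hU]
  have hVval : ⇑(evalRingHom (0:ℝ)) ∘ V = v := by ext k; simp [hV]
  have hcval : (evalRingHom (0:ℝ)) ((-1) ^ (m + 1) * s ^ m) = (-1) ^ (m + 1) := by
    simp [hs_def, eval_mul, eval_pow, eval_sub, eval_one, eval_X]
  rw [hsval, hUval, hVval, hcval, one_smul] at h3
  exact h3

/-- The (i,j) minor (i ≠ j) of `A = c • (u vᵀ - I)` equals
`(-1)^(n-1+i+j) c^(n-1) uⱼvᵢ` (matrix size is `n+1`). -/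
theorem stmt_1 (n : ℕ) (c : ℝ) (u v : Fin (n + 1) → ℝ)
    (A : Matrix (Fin (n + 1)) (Fin (n + 1)) ℝ)
    (hA : A = c • (Matrix.vecMulVec u v - 1)) (i j : Fin (n + 1)) (hij : i ≠ j) :
    (A.submatrix i.succAbove j.succAbove).det
      = (-1 : ℝ) ^ (n + (i : ℕ) + (j : ℕ)) * c ^ n * (u j * v i) := by
  cases n with
  | zero => exact absurd (Fin.fin_one_eq_zero i ▸ Fin.fin_one_eq_zero j ▸ rfl) hij
  | succ m =>
    have h := Matrix.adjugate_fin_succ_eq_det_submatrix A j i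
    have hsq : ((-1:ℝ)) ^ ((i:ℕ) + (j:ℕ)) * ((-1:ℝ)) ^ ((i:ℕ) + (j:ℕ)) = 1 := by
      rw [← pow_add, ← two_mul, pow_mul]
      norm_num
    have h2 : (A.submatrix i.succAbove j.succAbove).det
        = (-1:ℝ) ^ ((i:ℕ) + (j:ℕ)) * adjugate A j i := by
      rw [h, ← mul_assoc, hsq, one_mul]
    have hentry : adjugate A j i = c ^ (m+1) * ((-1:ℝ) ^ (m+1) * (u j * v i)) := by
      rw [hA, adjugate_smul, adj_real' u v]
      simp only [Fintype.card_fin, Nat.add_sub_cancel, Matrix.smul_apply, Matrix.add_apply,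
        vecMulVec_apply, smul_eq_mul]
      rw [Matrix.one_apply_ne (Ne.symm hij)]
      ring
    rw [h2, hentry, pow_add, pow_add]
    ring
end

section
/- Let Rs be a 4-linear form on a vector space V = F ⊕ G satisfying: (a) Rs(X,Y,Z,W) = −Rs(X,Y,W,Z); (b) the algebraic Bianchi identity Rs(X,Y,Z,W) + Rs(X,Z,W,Y) + Rs(X,W,Y,Z) = 0; (c) Rs(X,Y,Z,W) = Rs(Y,X,Z,W); (d) Rs vanishes whenever the first two arguments both lie in F or both lie in G; (e) Rs vanishes whenever the last two arguments both lie in F or both lie in G. If Rs(X_F, Y_G, Y_G, X_F) = 0 for all X_F ∈ F and Y_G ∈ G, then Rs = 0. -/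
/-- Algebraic core of the flatness criterion: a 4-linear form with the symmetries
(a)–(e) of the symplectic curvature tensor of a bi-Lagrangian structure which has
vanishing "sectional" values `Rs(X_F, Y_G, Y_G, X_F)` vanishes identically. -/
theorem stmt_9 {V : Type*} [AddCommGroup V] [Module ℝ V]
    (F G : Submodule ℝ V) (hFG : IsCompl F G)
    (Rs : V →ₗ[ℝ] V →ₗ[ℝ] V →ₗ[ℝ] V →ₗ[ℝ] ℝ)
    (ha : ∀ X Y Z W, Rs X Y Z W = - Rs X Y W Z)
    (hb : ∀ X Y Z W, Rs X Y Z W + Rs X Z W Y + Rs X W Y Z = 0)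
    (hc : ∀ X Y Z W, Rs X Y Z W = Rs Y X Z W)
    (hd : ∀ X Y Z W, (X ∈ F ∧ Y ∈ F) ∨ (X ∈ G ∧ Y ∈ G) → Rs X Y Z W = 0)
    (he : ∀ X Y Z W, (Z ∈ F ∧ W ∈ F) ∨ (Z ∈ G ∧ W ∈ G) → Rs X Y Z W = 0)
    (h0 : ∀ X ∈ F, ∀ Y ∈ G, Rs X Y Y X = 0) :
    Rs = 0 := by
  -- swapping the two F-arguments (positions 1 and 3), given G-arguments in 2 and 4
  have hswapf : ∀ g ∈ G, ∀ g' ∈ G, ∀ f f' : V, Rs f g f' g' = Rs f' g f g' := by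
    intro g hg g' hg' f f'
    linarith [hc f g f' g', hc f' g f g', ha g f' f g', hb g f f' g',
      hd g g' f f' (Or.inr ⟨hg, hg'⟩)]
  -- swapping the two G-arguments (positions 2 and 4), given F-arguments in 1 and 3
  have hswapg : ∀ f ∈ F, ∀ f' ∈ F, ∀ g g' : V, Rs f g f' g' = Rs f g' f' g := by
    intro f hf f' hf' g g'
    linarith [hb f g f' g', hd f f' g' g (Or.inl ⟨hf, hf'⟩), ha f g' f' g]
  -- polarization of h0 in the F-variable
  have h1 : ∀ f ∈ F, ∀ f' ∈ F, ∀ g ∈ G, Rs f g f' g = 0 := by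
    intro f hf f' hf' g hg
    have hexp := h0 (f + f') (F.add_mem hf hf') g hg
    simp only [map_add, LinearMap.add_apply] at hexp
    linarith [h0 f hf g hg, h0 f' hf' g hg, ha f g g f', ha f' g g f,
      hswapf g hg g hg f' f]
  -- full polarization
  have key : ∀ f ∈ F, ∀ g ∈ G, ∀ f' ∈ F, ∀ g' ∈ G, Rs f g f' g' = 0 := by
    intro f hf g hg f' hf' g' hg'
    have hexp := h1 f hf f' hf' (g + g') (G.add_mem hg hg')
    simp only [map_add, LinearMap.add_apply] at hexp
    linarith [h1 f hf f' hf' g hg, h1 f hf f' hf' g' hg',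
      hswapg f hf f' hf' g' g]
  -- vanishing on all "pure" quadruples
  have pure : ∀ x y z w : V, (x ∈ F ∨ x ∈ G) → (y ∈ F ∨ y ∈ G) →
      (z ∈ F ∨ z ∈ G) → (w ∈ F ∨ w ∈ G) → Rs x y z w = 0 := by
    have mix2 : ∀ x ∈ F, ∀ y ∈ G, ∀ z w : V,
        (z ∈ F ∨ z ∈ G) → (w ∈ F ∨ w ∈ G) → Rs x y z w = 0 := by
      intro x hx y hy z w hz hw
      rcases hz with hz | hz <;> rcases hw with hw | hw
      · exact he x y z w (Or.inl ⟨hz, hw⟩)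
      · exact key x hx y hy z hz w hw
      · rw [ha, key x hx y hy w hw z hz]; ring
      · exact he x y z w (Or.inr ⟨hz, hw⟩)
    intro x y z w hx hy hz hw
    rcases hx with hx | hx <;> rcases hy with hy | hy
    · exact hd x y z w (Or.inl ⟨hx, hy⟩)
    · exact mix2 x hx y hy z w hz hw
    · rw [hc]; exact mix2 y hy x hx z w hz hw
    · exact hd x y z w (Or.inr ⟨hx, hy⟩)
  -- decompose arbitrary vectors
  have hv : ∀ v : V, ∃ a ∈ F, ∃ b ∈ G, a + b = v := by
    intro v
    have : v ∈ F ⊔ G := by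
      rw [codisjoint_iff.mp hFG.codisjoint]; exact Submodule.mem_top
    exact Submodule.mem_sup.mp this
  ext X Y Z W
  obtain ⟨x1, hx1, x2, hx2, hX⟩ := hv X
  obtain ⟨y1, hy1, y2, hy2, hY⟩ := hv Y
  obtain ⟨z1, hz1, z2, hz2, hZ⟩ := hv Z
  obtain ⟨w1, hw1, w2, hw2, hW⟩ := hv W
  have hx1' : x1 ∈ F ∨ x1 ∈ G := Or.inl hx1
  have hx2' : x2 ∈ F ∨ x2 ∈ G := Or.inr hx2
  have hy1' : y1 ∈ F ∨ y1 ∈ G := Or.inl hy1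
  have hy2' : y2 ∈ F ∨ y2 ∈ G := Or.inr hy2
  have hz1' : z1 ∈ F ∨ z1 ∈ G := Or.inl hz1
  have hz2' : z2 ∈ F ∨ z2 ∈ G := Or.inr hz2
  have hw1' : w1 ∈ F ∨ w1 ∈ G := Or.inl hw1
  have hw2' : w2 ∈ F ∨ w2 ∈ G := Or.inr hw2
  rw [← hX, ← hY, ← hZ, ← hW]
  simp only [map_add, LinearMap.add_apply, LinearMap.zero_apply]
  linarith [pure x1 y1 z1 w1 hx1' hy1' hz1' hw1',
      pure x1 y1 z1 w2 hx1' hy1' hz1' hw2',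
      pure x1 y1 z2 w1 hx1' hy1' hz2' hw1',
      pure x1 y1 z2 w2 hx1' hy1' hz2' hw2',
      pure x1 y2 z1 w1 hx1' hy2' hz1' hw1',
      pure x1 y2 z1 w2 hx1' hy2' hz1' hw2',
      pure x1 y2 z2 w1 hx1' hy2' hz2' hw1',
      pure x1 y2 z2 w2 hx1' hy2' hz2' hw2',
      pure x2 y1 z1 w1 hx2' hy1' hz1' hw1',
      pure x2 y1 z1 w2 hx2' hy1' hz1' hw2',
      pure x2 y1 z2 w1 hx2' hy1' hz2' hw1',
      pure x2 y1 z2 w2 hx2' hy1' hz2' hw2',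
      pure x2 y2 z1 w1 hx2' hy2' hz1' hw1',
      pure x2 y2 z1 w2 hx2' hy2' hz1' hw2',
      pure x2 y2 z2 w1 hx2' hy2' hz2' hw1',
      pure x2 y2 z2 w2 hx2' hy2' hz2' hw2']
end

section
/- Consider the system of two polynomial equations in real variables (ρ₂, σ₂) with parameters n and ρ: 0 = −(n+7)ρ²σ₂² + n³ − 7n² + 7n + 15 and 0 = −9(n+7)ρ²σ₂² + n³ + 21n² − 169n + 291. Any common solution forces 2n³ − 21n² + 58n − 39 = 0, whose only real roots are n = 1, n = 3, and n = 13/2. In particular, for a natural number n ≥ 2 with n ≠ 3 the system has no solution. -/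
/-- Elimination step in the Ricci-flatness analysis of the space of rays:
the two equations force `2n³ - 21n² + 58n - 39 = 0`, whose real roots are
`1`, `3`, `13/2`; hence for a natural `n ≥ 2`, `n ≠ 3`, the system is unsolvable. -/
theorem stmt_14 :
    (∀ n ρ σ₂ : ℝ,
        ((0 : ℝ) = -(n + 7) * ρ ^ 2 * σ₂ ^ 2 + n ^ 3 - 7 * n ^ 2 + 7 * n + 15 ∧
          (0 : ℝ) = -9 * (n + 7) * ρ ^ 2 * σ₂ ^ 2 + n ^ 3 + 21 * n ^ 2 - 169 * n + 291) →
        2 * n ^ 3 - 21 * n ^ 2 + 58 * n - 39 = 0) ∧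
    (∀ n : ℝ, 2 * n ^ 3 - 21 * n ^ 2 + 58 * n - 39 = 0 ↔ (n = 1 ∨ n = 3 ∨ n = 13 / 2)) ∧
    (∀ n : ℕ, 2 ≤ n → n ≠ 3 → ∀ ρ σ₂ : ℝ,
        ¬((0 : ℝ) = -((n : ℝ) + 7) * ρ ^ 2 * σ₂ ^ 2 + (n : ℝ) ^ 3 - 7 * (n : ℝ) ^ 2
              + 7 * (n : ℝ) + 15 ∧
          (0 : ℝ) = -9 * ((n : ℝ) + 7) * ρ ^ 2 * σ₂ ^ 2 + (n : ℝ) ^ 3 + 21 * (n : ℝ) ^ 2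
              - 169 * (n : ℝ) + 291)) := by
  have h1 : ∀ n ρ σ₂ : ℝ,
      ((0 : ℝ) = -(n + 7) * ρ ^ 2 * σ₂ ^ 2 + n ^ 3 - 7 * n ^ 2 + 7 * n + 15 ∧
        (0 : ℝ) = -9 * (n + 7) * ρ ^ 2 * σ₂ ^ 2 + n ^ 3 + 21 * n ^ 2 - 169 * n + 291) →
      2 * n ^ 3 - 21 * n ^ 2 + 58 * n - 39 = 0 := by
    intro n ρ σ₂ ⟨e1, e2⟩
    nlinarith [e1, e2]
  have h2 : ∀ n : ℝ, 2 * n ^ 3 - 21 * n ^ 2 + 58 * n - 39 = 0 ↔ (n = 1 ∨ n = 3 ∨ n = 13 / 2) := by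
    intro n
    constructor
    · intro h
      have hf : (n - 1) * ((n - 3) * (2 * n - 13)) = 0 := by ring_nf; linarith
      rcases mul_eq_zero.mp hf with h | h
      · left; linarith
      · rcases mul_eq_zero.mp h with h | h
        · right; left; linarith
        · right; right; linarith
    · rintro (rfl | rfl | rfl) <;> norm_num
  refine ⟨h1, h2, ?_⟩
  intro n hn hn3 ρ σ₂ hsys
  have := (h2 (n : ℝ)).mp (h1 (n : ℝ) ρ σ₂ hsys)
  rcases this with h | h | h
  · have : (n : ℝ) ≥ 2 := by exact_mod_cast hn
    linarith
  · exact hn3 (by exact_mod_cast h)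
  · have h2n : (2 * n : ℝ) = 13 := by push_cast; linarith
    have : (2 * n : ℕ) = 13 := by exact_mod_cast h2n
    omega
end

section
/- The system of two real polynomial equations 0 = (n²−8n+15)σ⁴ − 16(n²−5n+54)σ² + 48(n²−12n+27) and 0 = (n⁴−11n³+68n²−169n+111)σ⁶ + 12(16n³−41n²+500n−1243)σ⁴ − 16(n⁴+23n³−186n²+1525n−3667)σ² + 192(2n³−21n²+58n−39) has no common real solution σ for any natural number n ≥ 2 with n ≠ 3. -/
theorem szpoly_neg (k : ℤ) (hk : 25 ≤ k) :
    (-1) * k ^ 11 + (-12) * k ^ 10 + (-33) * k ^ 9 + (-3118) * k ^ 8 + (82422) * k ^ 7 + (-305160) * k ^ 6 + (441262) * k ^ 5 + (5359716) * k ^ 4 + (-49559733) * k ^ 3 + (113970244) * k ^ 2 + (264026931) * k + (-1098424422) < 0 := by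
  have hk0 : (0:ℤ) ≤ k := by linarith
  have hk2 : (625:ℤ) ≤ k ^ 2 := by nlinarith
  have hk3 : (15625:ℤ) ≤ k ^ 3 := by nlinarith
  have hk4 : (390625:ℤ) ≤ k ^ 4 := by nlinarith
  have hk5 : (9765625:ℤ) ≤ k ^ 5 := by nlinarith
  have hk6 : (244140625:ℤ) ≤ k ^ 6 := by nlinarith
  have p5 : (0:ℤ) ≤ k ^ 5 := pow_nonneg hk0 5
  have p7 : (0:ℤ) ≤ k ^ 7 := pow_nonneg hk0 7
  have p4 : (0:ℤ) ≤ k ^ 4 := pow_nonneg hk0 4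
  have p3 : (0:ℤ) ≤ k ^ 3 := pow_nonneg hk0 3
  have p6 : (0:ℤ) ≤ k ^ 6 := pow_nonneg hk0 6
  have p8 : (0:ℤ) ≤ k ^ 8 := pow_nonneg hk0 8
  have p9 : (0:ℤ) ≤ k ^ 9 := pow_nonneg hk0 9
  have p10 : (0:ℤ) ≤ k ^ 10 := pow_nonneg hk0 10
  have p2 : (0:ℤ) ≤ k ^ 2 := pow_nonneg hk0 2
  have a1 : 390625 * k ^ 7 ≤ k ^ 11 := by nlinarith [mul_nonneg (sub_nonneg.2 hk4) p7]
  have a2 : 625 * k ^ 5 ≤ k ^ 7 := by nlinarith [mul_nonneg (sub_nonneg.2 hk2) p5]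
  have a3 : 15625 * k ^ 4 ≤ k ^ 7 := by nlinarith [mul_nonneg (sub_nonneg.2 hk3) p4]
  have a4 : 9765625 * k ^ 2 ≤ k ^ 7 := by nlinarith [mul_nonneg (sub_nonneg.2 hk5) p2]
  have a5 : 244140625 * k ≤ k ^ 7 := by nlinarith [mul_nonneg (sub_nonneg.2 hk6) hk0]
  linarith

/-- The reduced equations from `c₁₂ - c₂₁ = 0` and `c₂₂ = 0` (after setting
`ρ₁ = 0`) have no common real solution `σ` for any natural `n ≥ 2`, `n ≠ 3`. -/
theorem stmt_15 (n : ℕ) (hn : 2 ≤ n) (hn3 : n ≠ 3) (σ : ℝ) :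
    ¬((((n : ℝ) ^ 2 - 8 * n + 15) * σ ^ 4 - 16 * ((n : ℝ) ^ 2 - 5 * n + 54) * σ ^ 2
          + 48 * ((n : ℝ) ^ 2 - 12 * n + 27) = 0) ∧
      (((n : ℝ) ^ 4 - 11 * n ^ 3 + 68 * n ^ 2 - 169 * n + 111) * σ ^ 6
          + 12 * (16 * (n : ℝ) ^ 3 - 41 * n ^ 2 + 500 * n - 1243) * σ ^ 4
          - 16 * ((n : ℝ) ^ 4 + 23 * n ^ 3 - 186 * n ^ 2 + 1525 * n - 3667) * σ ^ 2
          + 192 * (2 * (n : ℝ) ^ 3 - 21 * n ^ 2 + 58 * n - 39) = 0)) := by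
  rintro ⟨hP, hQ⟩
  by_cases hn5 : n = 5
  · subst hn5
    norm_num at hP
    nlinarith [sq_nonneg σ]
  · have h3 : ((n:ℝ)) - 3 ≠ 0 := sub_ne_zero.mpr (by exact_mod_cast hn3)
    have h5 : ((n:ℝ)) - 5 ≠ 0 := sub_ne_zero.mpr (by exact_mod_cast hn5)
    have key : (((n:ℝ)) - 3) ^ 4 * (((n:ℝ)) - 5) ^ 2 * ((-1) * ((n:ℝ)) ^ 11 + (-12) * ((n:ℝ)) ^ 10 + (-33) * ((n:ℝ)) ^ 9 + (-3118) * ((n:ℝ)) ^ 8 + (82422) * ((n:ℝ)) ^ 7 + (-305160) * ((n:ℝ)) ^ 6 + (441262) * ((n:ℝ)) ^ 5 + (5359716) * ((n:ℝ)) ^ 4 + (-49559733) * ((n:ℝ)) ^ 3 + (113970244) * ((n:ℝ)) ^ 2 + (264026931) * ((n:ℝ)) + (-1098424422)) = 0 := by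
      linear_combination ((((-26624) * ((n:ℝ)) ^ 15 + (342016) * ((n:ℝ)) ^ 14 + (-5256704) * ((n:ℝ)) ^ 13 + (42419712) * ((n:ℝ)) ^ 12 + (114170880) * ((n:ℝ)) ^ 11 + (-2763168768) * ((n:ℝ)) ^ 10 + (-772508160) * ((n:ℝ)) ^ 9 + (234468862464) * ((n:ℝ)) ^ 8 + (-2331324088320) * ((n:ℝ)) ^ 7 + (12520712065024) * ((n:ℝ)) ^ 6 + (-37363426830848) * ((n:ℝ)) ^ 5 + (28590586788352) * ((n:ℝ)) ^ 4 + (215529962376192) * ((n:ℝ)) ^ 3 + (-849165917727744) * ((n:ℝ)) ^ 2 + (1315123352087040) * ((n:ℝ)) + (-783328026585600)) + ((768) * ((n:ℝ)) ^ 16 + (3456) * ((n:ℝ)) ^ 15 + (-154368) * ((n:ℝ)) ^ 14 + (3041664) * ((n:ℝ)) ^ 13 + (-55192320) * ((n:ℝ)) ^ 12 + (778299264) * ((n:ℝ)) ^ 11 + (-8634919680) * ((n:ℝ)) ^ 10 + (73473065856) * ((n:ℝ)) ^ 9 + (-472958809344) * ((n:ℝ)) ^ 8 + (2289801023616) * ((n:ℝ))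 ^ 7 + (-7816816744704) * ((n:ℝ)) ^ 6 + (14221313778816) * ((n:ℝ)) ^ 5 + (14858501201664) * ((n:ℝ)) ^ 4 + (-171885185541504) * ((n:ℝ)) ^ 3 + (473157081407232) * ((n:ℝ)) ^ 2 + (-620543612891520) * ((n:ℝ)) + (329523978124800)) * σ ^ 2 + ((192) * ((n:ℝ)) ^ 16 + (-6112) * ((n:ℝ)) ^ 15 + (108672) * ((n:ℝ)) ^ 14 + (-1439488) * ((n:ℝ)) ^ 13 + (15731872) * ((n:ℝ)) ^ 12 + (-145844896) * ((n:ℝ)) ^ 11 + (1123328704) * ((n:ℝ)) ^ 10 + (-6895309888) * ((n:ℝ)) ^ 9 + (31948968160) * ((n:ℝ)) ^ 8 + (-101614867744) * ((n:ℝ)) ^ 7 + (162291421440) * ((n:ℝ)) ^ 6 + (240006336896) * ((n:ℝ)) ^ 5 + (-2186482325664) * ((n:ℝ)) ^ 4 + (6123989971872) * ((n:ℝ)) ^ 3 + (-9285623078976) * ((n:ℝ)) ^ 2 + (7504075431360) * ((n:ℝ)) + (-2482688426400)) * σ ^ 4) / 393216) * hP + ((((2304) * ((n:ℝ)) ^ 14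 + (-48256) * ((n:ℝ)) ^ 13 + (719232) * ((n:ℝ)) ^ 12 + (-9269504) * ((n:ℝ)) ^ 11 + (104966656) * ((n:ℝ)) ^ 10 + (-1041409920) * ((n:ℝ)) ^ 9 + (8512023680) * ((n:ℝ)) ^ 8 + (-54089170432) * ((n:ℝ)) ^ 7 + (248361120000) * ((n:ℝ)) ^ 6 + (-701389529984) * ((n:ℝ)) ^ 5 + (501046256256) * ((n:ℝ)) ^ 4 + (4392245640960) * ((n:ℝ)) ^ 3 + (-17912104694784) * ((n:ℝ)) ^ 2 + (29419492947840) * ((n:ℝ)) + (-18771241449600)) + ((-192) * ((n:ℝ)) ^ 14 + (5536) * ((n:ℝ)) ^ 13 + (-86496) * ((n:ℝ)) ^ 12 + (1040192) * ((n:ℝ)) ^ 11 + (-10597120) * ((n:ℝ)) ^ 10 + (90758496) * ((n:ℝ)) ^ 9 + (-621724832) * ((n:ℝ)) ^ 8 + (3152687488) * ((n:ℝ)) ^ 7 + (-10490060736) * ((n:ℝ)) ^ 6 + (15717154400) * ((n:ℝ)) ^ 5 + (33583584480) * ((n:ℝ)) ^ 4 + (-239567594688) * ((n:ℝ)) ^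 3 + (573830248320) * ((n:ℝ)) ^ 2 + (-682192821600) * ((n:ℝ)) + (335498436000)) * σ ^ 2) / 393216) * hQ
    have hS : ((-1) * ((n:ℝ)) ^ 11 + (-12) * ((n:ℝ)) ^ 10 + (-33) * ((n:ℝ)) ^ 9 + (-3118) * ((n:ℝ)) ^ 8 + (82422) * ((n:ℝ)) ^ 7 + (-305160) * ((n:ℝ)) ^ 6 + (441262) * ((n:ℝ)) ^ 5 + (5359716) * ((n:ℝ)) ^ 4 + (-49559733) * ((n:ℝ)) ^ 3 + (113970244) * ((n:ℝ)) ^ 2 + (264026931) * ((n:ℝ)) + (-1098424422)) = 0 := by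
      rcases mul_eq_zero.mp key with h | h
      · rcases mul_eq_zero.mp h with h' | h'
        · exact absurd h' (pow_ne_zero _ h3)
        · exact absurd h' (pow_ne_zero _ h5)
      · exact h
    have hSZ : ((-1) * ((n:ℤ)) ^ 11 + (-12) * ((n:ℤ)) ^ 10 + (-33) * ((n:ℤ)) ^ 9 + (-3118) * ((n:ℤ)) ^ 8 + (82422) * ((n:ℤ)) ^ 7 + (-305160) * ((n:ℤ)) ^ 6 + (441262) * ((n:ℤ)) ^ 5 + (5359716) * ((n:ℤ)) ^ 4 + (-49559733) * ((n:ℤ)) ^ 3 + (113970244) * ((n:ℤ)) ^ 2 + (264026931) * ((n:ℤ)) + (-1098424422)) = 0 := by exact_mod_cast hS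
    by_cases hle : n ≤ 24
    · interval_cases n <;> norm_num at hSZ
    · have h25 : (25:ℤ) ≤ (n:ℤ) := by exact_mod_cast (by omega : 25 ≤ n)
      have := szpoly_neg ((n:ℤ)) h25
      linarith
end
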